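/- Assume additionally that both T₀ and T₁ code A, i.e. satisfy: (2) rk(η, T_l^A) < ∞ for every η ∈ T_l, where T_l^A = {η ∈ T_l : Suc(η) = A}, and (3) the map η ↦ rk(η, T_l^A \ {η}) is injective on T_l^A (l = 0, 1). If g is an automorphism of ℭ such that Suc(g(η)) = Suc(η) for every η ∈ C, then g is the identity. In particular, every nontrivial automorphism g of ℭ admits a node η with Suc(η) ≠ Suc(g(η)). -/

import Mathlib

namespace CTree

/-- A tree on `X`: a nonempty set of finite sequences closed under initial segments. -/
def IsTree {X : Type*} (T : Set (List X)) : Prop :=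
  T.Nonempty ∧ ∀ η ∈ T, ∀ ν : List X, ν <+: η → ν ∈ T

/-- `Suc_T(η) = {x : η⌢⟨x⟩ ∈ T}`. -/
def suc {X : Type*} (T : Set (List X)) (η : List X) : Set X :=
  {x | η ++ [x] ∈ T}

/-- The universe `C = T₀ ∪ T₁` of the structure `ℭ`: nodes are sequences over
`A ∪ B` (realized as `A ⊕ B`) tagged by which tree they belong to; the tags make
the two trees (in particular their roots `∅₀, ∅₁`) disjoint. -/
def Node {A B : Type*} (T : Bool → Set (List (A ⊕ B))) : Type _ :=
  {p : Bool × List (A ⊕ B) // p.2 ∈ T p.1}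

/-- The interpretation `≤^ℭ`: the union of the two tree orderings (nodes of
different trees are incomparable). -/
def nle {A B : Type*} {T : Bool → Set (List (A ⊕ B))} (p q : Node T) : Prop :=
  p.val.1 = q.val.1 ∧ p.val.2 <+: q.val.2

/-- The interpretation `R^ℭ` of an `n`-ary relation symbol `R` of `L`:
the tuples `(η⌢⟨a₁⟩, …, η⌢⟨aₙ⟩)` where `η ∈ T₀ ∪ T₁` and, if `Suc(η) = A` then
`(a₁, …, aₙ) ∈ R^𝔄`, while if `Suc(η) = B` then `(a₁, …, aₙ) ∈ R^𝔅`. -/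
def RC {A B : Type*} {ι : Type*} {ar : ι → ℕ}
    (RA : ∀ i, (Fin (ar i) → A) → Prop) (RB : ∀ i, (Fin (ar i) → B) → Prop)
    (T : Bool → Set (List (A ⊕ B))) (i : ι) (v : Fin (ar i) → Node T) : Prop :=
  ∃ (l : Bool) (η : List (A ⊕ B)), η ∈ T l ∧
    ((suc (T l) η = Set.range Sum.inl ∧
       ∃ a : Fin (ar i) → A, (∀ k, (v k).val = (l, η ++ [Sum.inl (a k)])) ∧ RA i a) ∨
     (suc (T l) η = Set.range Sum.inr ∧
       ∃ b : Fin (ar i) → B, (∀ k, (v k).val = (l, η ++ [Sum.inr (b k)])) ∧ RB i b))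

/-- An automorphism of `ℭ`: a bijection of the universe preserving `≤^ℭ` and all
the relations `R^ℭ` (in both directions). -/
def IsAut {A B : Type*} {ι : Type*} {ar : ι → ℕ}
    (RA : ∀ i, (Fin (ar i) → A) → Prop) (RB : ∀ i, (Fin (ar i) → B) → Prop)
    (T : Bool → Set (List (A ⊕ B))) (g : Node T ≃ Node T) : Prop :=
  (∀ p q : Node T, nle p q ↔ nle (g p) (g q)) ∧
  (∀ i (v : Fin (ar i) → Node T), RC RA RB T i v ↔ RC RA RB T i (g ∘ v))

end CTree

namespace CTree

/-- The descent relation used to compute the rank `rk(·, A')` in a tree `T` of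
finite sequences: `ν` lies below `μ` iff `ν` is a one-step extension of `μ`
inside `T` and `μ ∉ A'` (descent stops upon reaching `A'`).  `rk(η, A') < ∞`
for all `η ∈ T` iff this relation is well-founded, i.e. iff no infinite branch
of `T` avoids `A'`. -/
def step {X : Type*} (T A' : Set (List X)) (ν μ : List X) : Prop :=
  ν ∈ T ∧ μ ∉ A' ∧ ∃ x, ν = μ ++ [x]

open Classical in
/-- The rank `rk(η, A')` of `η` with respect to `A'`, defined as an ordinal when
it is `< ∞`, i.e. when the descent relation is well-founded (junk value `0`
otherwise). -/
noncomputable def rk {X : Type*} (T A' : Set (List X)) (η : List X) : Ordinal :=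
  if h : WellFounded (step T A') then
    @IsWellFounded.rank _ (step T A') ⟨h⟩ η
  else 0

/-- `T^A`, the set of nodes of `T` whose successor set is `A` (here
`A = Set.range Sum.inl` inside `A ⊕ B`). -/
def TA {A B : Type*} (T : Set (List (A ⊕ B))) : Set (List (A ⊕ B)) :=
  {η ∈ T | suc T η = Set.range Sum.inl}


variable {A B : Type*} {T : Bool → Set (List (A ⊕ B))}

lemma mem_of_prefix (hT : ∀ l, IsTree (T l)) {l : Bool} {η ν : List (A ⊕ B)}
    (hη : η ∈ T l) (hp : ν <+: η) : ν ∈ T l :=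
  (hT l).2 η hη ν hp

lemma nil_mem (hT : ∀ l, IsTree (T l)) (l : Bool) : [] ∈ T l := by
  obtain ⟨η, hη⟩ := (hT l).1
  exact mem_of_prefix hT hη (List.nil_prefix)

/-- root node -/
def rootN (hT : ∀ l, IsTree (T l)) (l : Bool) : Node T := ⟨(l, []), nil_mem hT l⟩

lemma range_ne [Nonempty A] :
    (Set.range (Sum.inl : A → A ⊕ B)) ≠ Set.range Sum.inr := by
  intro h
  obtain ⟨a⟩ := ‹Nonempty A›
  have : (Sum.inl a : A ⊕ B) ∈ Set.range Sum.inr := h ▸ Set.mem_range_self a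
  obtain ⟨b, hb⟩ := this
  cases hb

lemma root_fixed [Nonempty A] (hT : ∀ l, IsTree (T l))
    (hroot0 : suc (T false) [] = Set.range Sum.inl)
    (hroot1 : suc (T true) [] = Set.range Sum.inr)
    (g : Node T ≃ Node T)
    (hg1 : ∀ p q : Node T, nle p q ↔ nle (g p) (g q))
    (hgs : ∀ c : Node T, suc (T (g c).val.1) (g c).val.2 = suc (T c.val.1) c.val.2)
    (l : Bool) : g (rootN hT l) = rootN hT l := by
  have key : ∀ m : Bool, g (rootN hT l) = rootN hT m → m = l → g (rootN hT l) = rootN hT l := by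
    rintro m h rfl; exact h
  have hroot : g (rootN hT l) = rootN hT ((g (rootN hT l)).val.1) := by
    set m := (g (rootN hT l)).val.1 with hm
    have h1 : nle (rootN hT m) (g (rootN hT l)) := ⟨rfl, List.nil_prefix⟩
    have h2 : nle (g.symm (rootN hT m)) (rootN hT l) := by
      rw [hg1]; simpa using h1
    have h3 : g.symm (rootN hT m) = rootN hT l := by
      obtain ⟨ht, hp⟩ := h2
      have h4 := List.prefix_nil.mp hp
      apply Subtype.ext
      apply Prod.ext
      · exact ht
      · exact h4
    rw [← h3, Equiv.apply_symm_apply]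
  apply key _ hroot
  have h5 := hgs (rootN hT l)
  rw [hroot] at h5
  have h5' : suc (T ((g (rootN hT l)).val.1)) ([] : List (A ⊕ B)) = suc (T l) [] := h5
  rcases Bool.eq_false_or_eq_true l with hl | hl
  · rcases Bool.eq_false_or_eq_true ((g (rootN hT l)).val.1) with hm | hm
    · rw [hm, hl]
    · exfalso
      rw [hm] at h5'
      rw [hl] at h5'
      rw [hroot0, hroot1] at h5'
      exact range_ne h5'
  · rcases Bool.eq_false_or_eq_true ((g (rootN hT l)).val.1) with hm | hm
    · exfalso
      rw [hm] at h5'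
      rw [hl] at h5'
      rw [hroot0, hroot1] at h5'
      exact range_ne h5'.symm
    · rw [hm, hl]

lemma tag_fixed [Nonempty A] (hT : ∀ l, IsTree (T l))
    (hroot0 : suc (T false) [] = Set.range Sum.inl)
    (hroot1 : suc (T true) [] = Set.range Sum.inr)
    (g : Node T ≃ Node T)
    (hg1 : ∀ p q : Node T, nle p q ↔ nle (g p) (g q))
    (hgs : ∀ c : Node T, suc (T (g c).val.1) (g c).val.2 = suc (T c.val.1) c.val.2)
    (c : Node T) : (g c).val.1 = c.val.1 := by
  have h1 : nle (rootN hT c.val.1) c := ⟨rfl, List.nil_prefix⟩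
  have h2 := (hg1 _ _).mp h1
  rw [root_fixed hT hroot0 hroot1 g hg1 hgs] at h2
  exact h2.1.symm

/-- the nodes below `c` are equinumerous with `Fin (len + 1)` -/
noncomputable def eFin (hT : ∀ l, IsTree (T l)) (c : Node T) :
    {p : Node T // nle p c} ≃ Fin (c.val.2.length + 1) where
  toFun p := ⟨p.val.val.2.length, Nat.lt_succ_of_le p.2.2.length_le⟩
  invFun k := ⟨⟨(c.val.1, c.val.2.take k), mem_of_prefix hT c.2 (List.take_prefix _ _)⟩,
    rfl, List.take_prefix _ _⟩
  left_inv p := by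
    apply Subtype.ext
    apply Subtype.ext
    apply Prod.ext
    · exact p.2.1.symm
    · exact (List.prefix_iff_eq_take.mp p.2.2).symm
  right_inv k := by
    apply Fin.ext
    have := k.isLt
    simp only [List.length_take]
    omega

lemma len_fixed (hT : ∀ l, IsTree (T l)) (g : Node T ≃ Node T)
    (hg1 : ∀ p q : Node T, nle p q ↔ nle (g p) (g q))
    (c : Node T) : (g c).val.2.length = c.val.2.length := by
  have e3 : {p : Node T // nle p c} ≃ {q : Node T // nle q (g c)} :=
    g.subtypeEquiv (fun p => hg1 p c)
  have := Fin.equiv_iff_eq.mp ⟨(eFin hT c).symm.trans (e3.trans (eFin hT (g c)))⟩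
  omega

lemma child_step (hT : ∀ l, IsTree (T l)) (g : Node T ≃ Node T)
    (hg1 : ∀ p q : Node T, nle p q ↔ nle (g p) (g q))
    (c : Node T) (x : A ⊕ B) (hx : c.val.2 ++ [x] ∈ T c.val.1) :
    ∃ y, (g ⟨(c.val.1, c.val.2 ++ [x]), hx⟩).val.2 = (g c).val.2 ++ [y] := by
  set d : Node T := ⟨(c.val.1, c.val.2 ++ [x]), hx⟩ with hd
  have h1 : nle c d := ⟨rfl, List.prefix_append _ _⟩
  have h2 := (hg1 _ _).mp h1
  obtain ⟨t, ht⟩ := h2.2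
  have hl1 := len_fixed hT g hg1 c
  have hl2 := len_fixed hT g hg1 d
  have hlen : t.length = 1 := by
    have := congrArg List.length ht
    simp only [List.length_append] at this
    rw [hl1, hl2, hd] at this
    simp at this
    omega
  obtain ⟨y, rfl⟩ := List.length_eq_one_iff.mp hlen
  exact ⟨y, ht.symm⟩

/-- removing one point from the stopping set preserves well-foundedness -/
lemma wf_step_diff {X : Type*} (T' A' : Set (List X)) (hwf : WellFounded (step T' A'))
    (μ0 : List X) : WellFounded (step T' (A' \ {μ0})) := by
  have L0 : ∀ ν, Acc (step T' A') ν → μ0 <+: ν → ν ≠ μ0 → Acc (step T' (A' \ {μ0})) ν := by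
    intro ν hacc
    induction hacc with
    | intro η _ IH =>
      intro hpre hne
      constructor
      rintro ν' ⟨hmem, hnot, x, rfl⟩
      have hη : η ∉ A' := fun h => hnot ⟨h, hne⟩
      refine IH _ ⟨hmem, hη, x, rfl⟩ (hpre.trans (List.prefix_append _ _)) ?_
      intro h
      have := hpre.length_le
      rw [← h] at this
      simp at this
  constructor
  intro ν
  induction hwf.apply ν with
  | intro η _ IH =>
    constructor
    rintro ν' ⟨hmem, hnot, x, rfl⟩
    by_cases hη : η ∈ A'
    · have hq : η = μ0 := by
        by_contra hne
        exact hnot ⟨hη, hne⟩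
      refine L0 _ (hwf.apply _) (hq ▸ List.prefix_append _ _) ?_
      intro h
      rw [← hq] at h
      have := congrArg List.length h
      simp at this
    · exact IH _ ⟨hmem, hη, x, rfl⟩

/-- rank transfer along a map matching predecessors -/
lemma rank_congr {α : Type*} {r s : α → α → Prop}
    (hr : WellFounded r) (hs : WellFounded s) (f : α → α)
    (h : ∀ a b, s b (f a) ↔ ∃ a', r a' a ∧ f a' = b) (a : α) :
    @IsWellFounded.rank _ s ⟨hs⟩ (f a) = @IsWellFounded.rank _ r ⟨hr⟩ a := by
  induction a using hr.induction with
  | _ a IH =>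
    rw [@IsWellFounded.rank_eq _ s ⟨hs⟩, @IsWellFounded.rank_eq _ r ⟨hr⟩]
    apply le_antisymm
    · refine Ordinal.iSup_le_iff.mpr ?_
      rintro ⟨b, hb⟩
      obtain ⟨a', ha', rfl⟩ := (h a b).mp hb
      rw [IH a' ha']
      exact Ordinal.le_iSup (fun b : {b // r b a} => Order.succ (@IsWellFounded.rank _ r ⟨hr⟩ b)) ⟨a', ha'⟩
    · refine Ordinal.iSup_le_iff.mpr ?_
      rintro ⟨a', ha'⟩
      rw [← IH a' ha']
      exact Ordinal.le_iSup (fun b : {b // s b (f a)} => Order.succ (@IsWellFounded.rank _ s ⟨hs⟩ b))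
        ⟨f a', (h a (f a')).mpr ⟨a', ha', rfl⟩⟩

lemma fix_all [Nonempty A] [Nonempty B] (hT : ∀ l, IsTree (T l))
    (hsuc : ∀ l, ∀ η ∈ T l, suc (T l) η = Set.range Sum.inl ∨
      suc (T l) η = Set.range Sum.inr)
    (hroot0 : suc (T false) [] = Set.range Sum.inl)
    (hroot1 : suc (T true) [] = Set.range Sum.inr)
    (hwf : ∀ l, WellFounded (step (T l) (TA (T l))))
    (hinj : ∀ l, Set.InjOn (fun η => rk (T l) (TA (T l) \ {η}) η) (TA (T l)))
    (g : Node T ≃ Node T)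
    (hg1 : ∀ p q : Node T, nle p q ↔ nle (g p) (g q))
    (hgs : ∀ c : Node T, suc (T (g c).val.1) (g c).val.2 = suc (T c.val.1) c.val.2) :
    ∀ c, g c = c := by
  classical
  have hg1s : ∀ p q : Node T, nle p q ↔ nle (g.symm p) (g.symm q) := by
    intro p q
    rw [hg1 (g.symm p) (g.symm q), Equiv.apply_symm_apply, Equiv.apply_symm_apply]
  have hgss : ∀ c : Node T,
      suc (T (g.symm c).val.1) (g.symm c).val.2 = suc (T c.val.1) c.val.2 := by
    intro c
    have h := hgs (g.symm c)
    rw [Equiv.apply_symm_apply] at h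
    exact h.symm
  have htag := tag_fixed hT hroot0 hroot1 g hg1 hgs
  have htags := tag_fixed hT hroot0 hroot1 g.symm hg1s hgss
  have hfixTA : ∀ (l : Bool) (η : List (A ⊕ B)) (hm : η ∈ T l), η ∈ TA (T l) →
      g ⟨(l, η), hm⟩ = ⟨(l, η), hm⟩ := by
    intro l η hm hTAη
    set f : List (A ⊕ B) → List (A ⊕ B) :=
      fun ν => if h : ν ∈ T l then (g ⟨(l, ν), h⟩).val.2 else ν with hf
    set f' : List (A ⊕ B) → List (A ⊕ B) :=
      fun ν => if h : ν ∈ T l then (g.symm ⟨(l, ν), h⟩).val.2 else ν with hf'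
    have hnode : ∀ (ν : List (A ⊕ B)) (h : ν ∈ T l), (g ⟨(l, ν), h⟩).val.2 ∈ T l := by
      intro ν h
      have h2 := (g ⟨(l, ν), h⟩).2
      rwa [htag ⟨(l, ν), h⟩] at h2
    have hnodes : ∀ (ν : List (A ⊕ B)) (h : ν ∈ T l),
        (g.symm ⟨(l, ν), h⟩).val.2 ∈ T l := by
      intro ν h
      have h2 := (g.symm ⟨(l, ν), h⟩).2
      rwa [htags ⟨(l, ν), h⟩] at h2
    have hfT : ∀ ν, ν ∈ T l → f ν ∈ T l := by
      intro ν h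
      simp only [hf, dif_pos h]
      exact hnode ν h
    have hf'T : ∀ ν, ν ∈ T l → f' ν ∈ T l := by
      intro ν h
      simp only [hf', dif_pos h]
      exact hnodes ν h
    have hnodeeq : ∀ (ν : List (A ⊕ B)) (h : ν ∈ T l),
        (⟨(l, f ν), hfT ν h⟩ : Node T) = g ⟨(l, ν), h⟩ := by
      intro ν h
      apply Subtype.ext
      apply Prod.ext
      · exact (htag ⟨(l, ν), h⟩).symm
      · simp only [hf, dif_pos h]
    have hnodeeqs : ∀ (ν : List (A ⊕ B)) (h : ν ∈ T l),
        (⟨(l, f' ν), hf'T ν h⟩ : Node T) = g.symm ⟨(l, ν), h⟩ := by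
      intro ν h
      apply Subtype.ext
      apply Prod.ext
      · exact (htags ⟨(l, ν), h⟩).symm
      · simp only [hf', dif_pos h]
    have hf'f : ∀ ν (h : ν ∈ T l), f' (f ν) = ν := by
      intro ν h
      have h1 : f ν ∈ T l := hfT ν h
      have h2 : f' (f ν) = (g.symm ⟨(l, f ν), h1⟩).val.2 := by
        simp only [hf', dif_pos h1]
      rw [h2, show (⟨(l, f ν), h1⟩ : Node T) = g ⟨(l, ν), h⟩ from hnodeeq ν h]
      exact congrArg (fun c : Node T => c.val.2) (g.symm_apply_apply _)
    have hff' : ∀ ν (h : ν ∈ T l), f (f' ν) = ν := by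
      intro ν h
      have h1 : f' ν ∈ T l := hf'T ν h
      have h2 : f (f' ν) = (g ⟨(l, f' ν), h1⟩).val.2 := by
        simp only [hf, dif_pos h1]
      rw [h2, show (⟨(l, f' ν), h1⟩ : Node T) = g.symm ⟨(l, ν), h⟩ from hnodeeqs ν h]
      exact congrArg (fun c : Node T => c.val.2) (g.apply_symm_apply _)
    have hsucf : ∀ ν (h : ν ∈ T l), suc (T l) (f ν) = suc (T l) ν := by
      intro ν h
      have h1 := hgs ⟨(l, ν), h⟩
      rw [htag ⟨(l, ν), h⟩] at h1
      simpa only [hf, dif_pos h] using h1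
    have hTAf : ∀ ν (h : ν ∈ T l), (ν ∈ TA (T l) ↔ f ν ∈ TA (T l)) := by
      intro ν h
      simp only [TA, Set.mem_setOf_eq, hsucf ν h, hfT ν h, h, true_and]
    have hfinj : ∀ ν₁ ν₂ (h1 : ν₁ ∈ T l) (h2 : ν₂ ∈ T l), f ν₁ = f ν₂ → ν₁ = ν₂ := by
      intro ν₁ ν₂ h1 h2 he
      have heq : (⟨(l, f ν₁), hfT _ h1⟩ : Node T) = ⟨(l, f ν₂), hfT _ h2⟩ := by
        apply Subtype.ext
        apply Prod.ext
        · rfl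
        · exact he
      rw [hnodeeq ν₁ h1, hnodeeq ν₂ h2] at heq
      have := g.injective heq
      exact congrArg (fun c : Node T => c.val.2) this
    have hchild : ∀ ν (h : ν ∈ T l) x (hx : ν ++ [x] ∈ T l),
        ∃ y, f (ν ++ [x]) = f ν ++ [y] := by
      intro ν h x hx
      obtain ⟨y, hy⟩ := child_step hT g hg1 ⟨(l, ν), h⟩ x hx
      refine ⟨y, ?_⟩
      simp only [hf, dif_pos hx, dif_pos h]
      exact hy
    have hchilds : ∀ ν (h : ν ∈ T l) x (hx : ν ++ [x] ∈ T l),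
        ∃ y, f' (ν ++ [x]) = f' ν ++ [y] := by
      intro ν h x hx
      obtain ⟨y, hy⟩ := child_step hT g.symm hg1s ⟨(l, ν), h⟩ x hx
      refine ⟨y, ?_⟩
      simp only [hf', dif_pos hx, dif_pos h]
      exact hy
    have hwfr := wf_step_diff (T l) (TA (T l)) (hwf l) η
    have hwfs := wf_step_diff (T l) (TA (T l)) (hwf l) (f η)
    have hkey : ∀ a b, step (T l) (TA (T l) \ {f η}) b (f a) ↔
        ∃ a', step (T l) (TA (T l) \ {η}) a' a ∧ f a' = b := by
      intro a b
      by_cases ha : a ∈ T l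
      · constructor
        · rintro ⟨hbT, hnot, x, rfl⟩
          obtain ⟨y, hy⟩ := hchilds (f a) (hfT a ha) x hbT
          rw [hf'f a ha] at hy
          have haT' : a ++ [y] ∈ T l := by
            rw [← hy]
            exact hf'T _ hbT
          refine ⟨a ++ [y], ⟨haT', ?_, y, rfl⟩, ?_⟩
          · rintro ⟨haTA, hane⟩
            refine hnot ⟨(hTAf a ha).mp haTA, fun he => hane ?_⟩
            have : a = η := hfinj a η ha hm he
            exact this
          · rw [← hy, hff' _ hbT]
        · rintro ⟨a', ⟨ha'T, hanot, x, rfl⟩, rfl⟩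
          refine ⟨hfT _ ha'T, ?_, ?_⟩
          · rintro ⟨hfTA, hfne⟩
            refine hanot ⟨(hTAf a ha).mpr hfTA, fun he => hfne ?_⟩
            exact congrArg f he
          · obtain ⟨y, hy⟩ := hchild a ha x ha'T
            exact ⟨y, hy⟩
      · have hfa : f a = a := by simp only [hf, dif_neg ha]
        rw [hfa]
        constructor
        · rintro ⟨hbT, -, x, rfl⟩
          exact absurd (mem_of_prefix hT hbT (List.prefix_append _ _)) ha
        · rintro ⟨a', ⟨ha'T, -, x, rfl⟩, -⟩
          exact absurd (mem_of_prefix hT ha'T (List.prefix_append _ _)) ha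
    have hrank := rank_congr hwfr hwfs f hkey η
    have hrk : rk (T l) (TA (T l) \ {f η}) (f η) = rk (T l) (TA (T l) \ {η}) η := by
      rw [rk, rk, dif_pos hwfs, dif_pos hwfr]
      exact hrank
    have hfηTA : f η ∈ TA (T l) := (hTAf η hm).mp hTAη
    have heq : f η = η := hinj l hfηTA hTAη hrk
    rw [← hnodeeq η hm]
    exact Subtype.ext (Prod.ext rfl heq)
  -- every node has an extension in TA
  have hext : ∀ (l : Bool) (ν : List (A ⊕ B)), ν ∈ T l →
      ∃ μ, μ ∈ TA (T l) ∧ ν <+: μ := by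
    intro l ν hν
    induction (hwf l).apply ν with
    | intro ν _ IH =>
      by_cases hTAν : ν ∈ TA (T l)
      · exact ⟨ν, hTAν, List.prefix_refl _⟩
      · have hchild : ∃ x, ν ++ [x] ∈ T l := by
          rcases hsuc l ν hν with h | h
          · obtain ⟨a⟩ := ‹Nonempty A›
            exact ⟨Sum.inl a, show Sum.inl a ∈ suc (T l) ν from h ▸ ⟨a, rfl⟩⟩
          · obtain ⟨b⟩ := ‹Nonempty B›
            exact ⟨Sum.inr b, show Sum.inr b ∈ suc (T l) ν from h ▸ ⟨b, rfl⟩⟩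
        obtain ⟨x, hx⟩ := hchild
        obtain ⟨μ, hμ, hpre⟩ := IH _ ⟨hx, hTAν, x, rfl⟩ hx
        exact ⟨μ, hμ, (List.prefix_append _ _).trans hpre⟩
  -- conclude
  intro c
  obtain ⟨μ, hμTA, hpre⟩ := hext c.val.1 c.val.2 c.2
  have hμT : μ ∈ T c.val.1 := hμTA.1
  have hfixμ : g ⟨(c.val.1, μ), hμT⟩ = ⟨(c.val.1, μ), hμT⟩ :=
    hfixTA c.val.1 μ hμT hμTA
  have h1 : nle c ⟨(c.val.1, μ), hμT⟩ := ⟨rfl, hpre⟩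
  have h2 := (hg1 _ _).mp h1
  rw [hfixμ] at h2
  have hlen := len_fixed hT g hg1 c
  have h3 : (g c).val.2 = μ.take ((g c).val.2.length) := List.prefix_iff_eq_take.mp h2.2
  have h4 : c.val.2 = μ.take (c.val.2.length) := List.prefix_iff_eq_take.mp hpre
  have h5 : (g c).val.2 = c.val.2 := by
    rw [h3, h4, hlen, h4]
  apply Subtype.ext
  apply Prod.ext
  · exact htag c
  · exact h5

end CTree

/-- Assume both trees `T₀`, `T₁` code `A`, i.e. `rk(η, T_l^A) < ∞` for every
`η ∈ T_l` and `η ↦ rk(η, T_l^A \ {η})` is injective on `T_l^A`.  Then every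
automorphism `g` of `ℭ` with `Suc(g(η)) = Suc(η)` for all `η ∈ C` is the
identity; in particular, every nontrivial automorphism of `ℭ` admits a node `η`
with `Suc(η) ≠ Suc(g(η))`. -/
theorem stmt13 {A B : Type*} [Nonempty A] [Nonempty B]
    {ι : Type*} {ar : ι → ℕ}
    (RA : ∀ i, (Fin (ar i) → A) → Prop) (RB : ∀ i, (Fin (ar i) → B) → Prop)
    (T : Bool → Set (List (A ⊕ B)))
    (hT : ∀ l, CTree.IsTree (T l))
    (hsuc : ∀ l, ∀ η ∈ T l, CTree.suc (T l) η = Set.range Sum.inl ∨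
      CTree.suc (T l) η = Set.range Sum.inr)
    (hroot0 : CTree.suc (T false) [] = Set.range Sum.inl)
    (hroot1 : CTree.suc (T true) [] = Set.range Sum.inr)
    (hwf : ∀ l, WellFounded (CTree.step (T l) (CTree.TA (T l))))
    (hinj : ∀ l, Set.InjOn
      (fun η => CTree.rk (T l) (CTree.TA (T l) \ {η}) η) (CTree.TA (T l))) :
    (∀ g : CTree.Node T ≃ CTree.Node T, CTree.IsAut RA RB T g →
      (∀ c : CTree.Node T,
        CTree.suc (T (g c).val.1) (g c).val.2 = CTree.suc (T c.val.1) c.val.2) →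
      ∀ c, g c = c) ∧
    (∀ g : CTree.Node T ≃ CTree.Node T, CTree.IsAut RA RB T g →
      (∃ c, g c ≠ c) →
      ∃ c : CTree.Node T,
        CTree.suc (T (g c).val.1) (g c).val.2 ≠ CTree.suc (T c.val.1) c.val.2) := by
  have main : ∀ g : CTree.Node T ≃ CTree.Node T, CTree.IsAut RA RB T g →
      (∀ c : CTree.Node T,
        CTree.suc (T (g c).val.1) (g c).val.2 = CTree.suc (T c.val.1) c.val.2) →
      ∀ c, g c = c := by
    intro g hg hgs
    exact CTree.fix_all hT hsuc hroot0 hroot1 hwf hinj g hg.1 hgs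
  refine ⟨main, ?_⟩
  intro g hg hex
  by_contra h
  push_neg at h
  obtain ⟨c, hc⟩ := hex
  exact hc (main g hg h c)
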